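/- (Rate of asymptotic regularity of Krasnosel'skii–Mann iterations.) Let ‖·‖ be any norm on ℝⁿ, let T : ℝⁿ → ℝⁿ be nonexpansive (1-Lipschitz) with respect to ‖·‖, let θ ∈ (0,1), and suppose x* satisfies T(x*) = x*. Define x_{k+1} = (1 − θ)x_k + θT(x_k) from an arbitrary x_0. Then for every k ≥ 1, ‖x_k − T(x_k)‖ ≤ 2‖x_0 − x*‖ / √(kπθ(1−θ)); in particular ‖x_k − T(x_k)‖ → 0 as k → ∞. -/

import Mathlib

open Filter

namespace KM16

open Finset






/-- binomial weight `P(Bin(k,θ) = l)` -/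
noncomputable def w (θ : ℝ) (k l : ℕ) : ℝ := (k.choose l : ℝ) * θ^l * (1-θ)^(k-l)

/-- sign of `m - l` -/
def s0 (l m : ℕ) : ℝ := if l < m then 1 else if m < l then -1 else 0

/-- expectation of `F` under `Bin(k,θ)` -/
noncomputable def E (θ : ℝ) (k : ℕ) (F : ℕ → ℝ) : ℝ := ∑ l ∈ range (k+1), w θ k l * F l

noncomputable def A (θ : ℝ) (k j : ℕ) : ℝ := E θ k (fun l => E θ j (fun m => s0 l m))
noncomputable def B (θ : ℝ) (k j : ℕ) : ℝ := E θ k (fun l => E θ j (fun m => s0 l (m+1)))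

lemma s0_antisymm (l m : ℕ) : s0 m l = - s0 l m := by
  unfold s0
  rcases lt_trichotomy l m with h | h | h
  · rw [if_neg (by omega), if_pos h, if_pos h]
  · rw [if_neg (by omega), if_neg (by omega), if_neg (by omega), if_neg (by omega)]; ring
  · rw [if_pos h, if_neg (by omega), if_pos h]; ring

lemma s0_succ_succ (l m : ℕ) : s0 (l+1) (m+1) = s0 l m := by
  unfold s0; simp [Nat.succ_lt_succ_iff]

lemma E_congr (θ : ℝ) (k : ℕ) {F G : ℕ → ℝ} (h : ∀ l, F l = G l) : E θ k F = E θ k G := by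
  unfold E; exact Finset.sum_congr rfl (fun l _ => by rw [h l])

lemma E_const (θ : ℝ) (k : ℕ) (c : ℝ) : E θ k (fun _ => c) = c := by
  unfold E w
  have h1 : ∑ l ∈ range (k+1), (k.choose l : ℝ) * θ^l * (1-θ)^(k-l) * c
      = (θ + (1-θ))^k * c := by
    rw [add_pow, Finset.sum_mul]
    exact Finset.sum_congr rfl (fun l _ => by ring)
  rw [h1]; norm_num

lemma E_add_mul (θ : ℝ) (k : ℕ) (a b : ℝ) (F G : ℕ → ℝ) :
    E θ k (fun l => a * F l + b * G l) = a * E θ k F + b * E θ k G := by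
  unfold E
  rw [Finset.mul_sum, Finset.mul_sum, ← Finset.sum_add_distrib]
  exact Finset.sum_congr rfl (fun l _ => by ring)

/-- key recursion for binomial expectations -/
lemma E_succ (θ : ℝ) (k : ℕ) (F : ℕ → ℝ) :
    E θ (k+1) F = E θ k (fun l => (1-θ) * F l + θ * F (l+1)) := by
  unfold E
  rw [Finset.sum_range_succ' (fun l => w θ (k+1) l * F l) (k+1)]
  have hw0 : w θ (k+1) 0 * F 0 = (1-θ) * (w θ k 0 * F 0) := by
    unfold w; simp [pow_succ]; ring
  have hsplit : ∀ l ∈ range (k+1), w θ (k+1) (l+1) * F (l+1)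
      = θ * (w θ k l * F (l+1)) + (k.choose (l+1) : ℝ) * θ^(l+1) * (1-θ)^(k-(l+1)+1) * F (l+1) := by
    intro l hl
    rw [Finset.mem_range] at hl
    unfold w
    rw [Nat.choose_succ_succ, Nat.succ_sub_succ]
    have : k - l = k - (l+1) + 1 ∨ (l = k ∧ (k.choose (l+1) : ℝ) = 0) := by
      rcases Nat.lt_or_ge l k with h | h
      · left; omega
      · right; have : l = k := by omega
        subst this; simp [Nat.choose_succ_self]
    rcases this with h | ⟨h1, h2⟩
    · rw [h]; push_cast; ring
    · subst h1; rw [h2]; push_cast; simp [Nat.choose_succ_self]; ring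
  rw [Finset.sum_congr rfl hsplit, Finset.sum_add_distrib, hw0]
  have hlast : ∑ l ∈ range (k+1), (k.choose (l+1) : ℝ) * θ^(l+1) * (1-θ)^(k-(l+1)+1) * F (l+1)
      = ∑ l ∈ range k, (1-θ) * (w θ k (l+1) * F (l+1)) := by
    rw [Finset.sum_range_succ]
    simp [Nat.choose_succ_self]
    exact Finset.sum_congr rfl (fun l hl => by
      unfold w; ring)
  rw [hlast]
  have hrhs : ∑ l ∈ range (k+1), w θ k l * ((1-θ) * F l + θ * F (l+1))
      = ∑ l ∈ range (k+1), ((1-θ) * (w θ k l * F l) + θ * (w θ k l * F (l+1))) := by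
    exact Finset.sum_congr rfl (fun l _ => by ring)
  rw [hrhs, Finset.sum_add_distrib]
  have h2 : ∑ l ∈ range (k+1), (1-θ) * (w θ k l * F l)
      = ∑ l ∈ range k, (1-θ) * (w θ k (l+1) * F (l+1)) + (1-θ) * (w θ k 0 * F 0) := by
    rw [← Finset.sum_range_succ' (fun l => (1-θ) * (w θ k l * F l)) k]
  rw [h2]
  ring

lemma B_succ_left (θ : ℝ) (k j : ℕ) : B θ (k+1) j = (1-θ) * B θ k j + θ * A θ k j := by
  unfold B A
  rw [E_succ]
  rw [E_congr θ k (G := fun l => (1-θ) * E θ j (fun m => s0 l (m+1)) + θ * E θ j (fun m => s0 l m))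
    (fun l => by rw [E_congr θ j (G := fun m => s0 l m) (fun m => s0_succ_succ l m)])]
  exact E_add_mul θ k (1-θ) θ _ _

lemma A_succ_right (θ : ℝ) (k j : ℕ) : A θ k (j+1) = (1-θ) * A θ k j + θ * B θ k j := by
  unfold A B
  rw [E_congr θ k (G := fun l => (1-θ) * E θ j (fun m => s0 l m) + θ * E θ j (fun m => s0 l (m+1)))
    (fun l => by rw [E_succ]; exact E_add_mul θ j (1-θ) θ _ _)]
  exact E_add_mul θ k (1-θ) θ _ _

lemma A_diag (θ : ℝ) (j : ℕ) : A θ j j = 0 := by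
  unfold A E
  have h : ∑ l ∈ range (j+1), w θ j l * ∑ m ∈ range (j+1), w θ j m * s0 l m
      = ∑ l ∈ range (j+1), ∑ m ∈ range (j+1), w θ j l * (w θ j m * s0 l m) := by
    exact Finset.sum_congr rfl (fun l _ => Finset.mul_sum _ _ _)
  rw [h]
  have h2 : ∑ l ∈ range (j+1), ∑ m ∈ range (j+1), w θ j l * (w θ j m * s0 l m)
      = - ∑ l ∈ range (j+1), ∑ m ∈ range (j+1), w θ j l * (w θ j m * s0 l m) := by
    nth_rewrite 1 [Finset.sum_comm]
    rw [← Finset.sum_neg_distrib]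
    refine Finset.sum_congr rfl (fun l _ => ?_)
    rw [← Finset.sum_neg_distrib]
    refine Finset.sum_congr rfl (fun m _ => ?_)
    rw [s0_antisymm]; ring
  linarith
lemma B_zero_left (θ : ℝ) (j : ℕ) : B θ 0 j = 1 := by
  unfold B
  have h0 : E θ 0 (fun l => E θ j (fun m => s0 l (m+1))) = E θ j (fun m => s0 0 (m+1)) := by
    unfold E; simp [w]
  rw [h0]
  have h1 : ∀ m, s0 0 (m+1) = 1 := fun m => by unfold s0; simp
  rw [E_congr θ j (G := fun _ => (1:ℝ)) (fun m => h1 m), E_const]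


/-- diagonal closed form -/
noncomputable def cdiag (θ : ℝ) (j : ℕ) : ℝ :=
  ∑ l ∈ range (j+1), (w θ j l)^2 + ∑ l ∈ range j, w θ j l * w θ j (l+1)

lemma s0_succ_eq (l m : ℕ) : s0 l (m+1) = s0 l m + (if m = l then 1 else 0) + (if m+1 = l then 1 else 0) := by
  unfold s0
  rcases lt_trichotomy l m with h | h | h
  · rw [if_pos (by omega), if_pos h, if_neg (by omega), if_neg (by omega)]; ring
  · rw [if_pos (by omega), if_neg (by omega), if_neg (by omega), if_pos (by omega),
      if_neg (by omega)]; ring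
  · by_cases h2 : m + 1 = l
    · rw [if_neg (by omega), if_neg (by omega), if_neg (by omega), if_pos h,
        if_neg (by omega), if_pos h2]; ring
    · rw [if_neg (by omega), if_pos (by omega), if_neg (by omega), if_pos h,
        if_neg (by omega), if_neg h2]; ring

lemma B_diag (θ : ℝ) (j : ℕ) : B θ j j = cdiag θ j := by
  unfold B
  rw [E_congr θ j (G := fun l => E θ j (fun m => s0 l m)
      + (E θ j (fun m => if m = l then 1 else 0) + E θ j (fun m => if m+1 = l then 1 else 0)))
    (fun l => by
      rw [E_congr θ j (G := fun m => s0 l m + ((if m = l then 1 else 0) + (if m+1 = l then 1 else 0)))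
        (fun m => by rw [s0_succ_eq]; ring)]
      have e1 := E_add_mul θ j 1 1 (fun m => s0 l m) (fun m => (if m = l then 1 else 0) + (if m+1 = l then 1 else 0))
      simp only [one_mul] at e1
      rw [e1]
      have e2 := E_add_mul θ j 1 1 (fun m => (if m = l then 1 else 0)) (fun m => (if m+1 = l then 1 else 0))
      simp only [one_mul] at e2
      rw [e2])]
  have hsplit := E_add_mul θ j 1 1 (fun l => E θ j (fun m => s0 l m))
    (fun l => E θ j (fun m => if m = l then 1 else 0) + E θ j (fun m => if m+1 = l then 1 else 0))
  simp only [one_mul] at hsplit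
  rw [hsplit]
  have hA : E θ j (fun l => E θ j (fun m => s0 l m)) = A θ j j := rfl
  rw [hA, A_diag]
  have hsplit2 := E_add_mul θ j 1 1 (fun l => E θ j (fun m => if m = l then 1 else 0))
    (fun l => E θ j (fun m => if m+1 = l then 1 else 0))
  simp only [one_mul] at hsplit2
  rw [hsplit2]
  -- first piece: ∑ w^2
  have h1 : E θ j (fun l => E θ j (fun m => if m = l then 1 else 0)) = ∑ l ∈ range (j+1), (w θ j l)^2 := by
    unfold E
    dsimp only
    refine Finset.sum_congr rfl (fun l hl => ?_)
    have e3 : ∑ m ∈ range (j+1), w θ j m * (if m = l then 1 else 0)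
        = ∑ m ∈ range (j+1), (if m = l then w θ j m else 0) := by
      refine Finset.sum_congr rfl (fun m _ => ?_)
      split <;> simp
    rw [e3, Finset.sum_ite_eq' (range (j+1)) l (w θ j), if_pos hl]
    ring
  -- second piece
  have h2 : E θ j (fun l => E θ j (fun m => if m+1 = l then 1 else 0)) = ∑ l ∈ range j, w θ j l * w θ j (l+1) := by
    unfold E
    dsimp only
    have hinner : ∀ l, ∑ m ∈ range (j+1), w θ j m * (if m+1 = l then 1 else 0)
        = ∑ m ∈ range (j+1), (if m = l - 1 ∧ 1 ≤ l then w θ j m else 0) := by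
      intro l
      refine Finset.sum_congr rfl (fun m _ => ?_)
      by_cases h : m + 1 = l
      · rw [if_pos h, if_pos ⟨by omega, by omega⟩]; ring
      · rw [if_neg h, if_neg (by omega)]; ring
    have houter : ∀ l ∈ range (j+1), w θ j l * ∑ m ∈ range (j+1), (if m = l - 1 ∧ 1 ≤ l then w θ j m else 0)
        = (if 1 ≤ l then w θ j l * w θ j (l-1) else 0) := by
      intro l hl
      rw [Finset.mem_range] at hl
      by_cases h : 1 ≤ l
      · have e4 : ∑ m ∈ range (j+1), (if m = l - 1 ∧ 1 ≤ l then w θ j m else 0)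
            = ∑ m ∈ range (j+1), (if m = l - 1 then w θ j m else 0) := by
          refine Finset.sum_congr rfl (fun m _ => ?_)
          by_cases h2 : m = l - 1
          · rw [if_pos ⟨h2, h⟩, if_pos h2]
          · rw [if_neg (fun hc => h2 hc.1), if_neg h2]
        rw [e4, Finset.sum_ite_eq' (range (j+1)) (l-1) (w θ j),
          if_pos (Finset.mem_range.mpr (by omega)), if_pos h]
      · have hl0 : l = 0 := by omega
        subst hl0
        simp
    calc ∑ l ∈ range (j+1), w θ j l * ∑ m ∈ range (j+1), w θ j m * (if m+1 = l then 1 else 0)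
        = ∑ l ∈ range (j+1), (if 1 ≤ l then w θ j l * w θ j (l-1) else 0) := by
          refine Finset.sum_congr rfl (fun l hl => ?_)
          rw [hinner l]; exact houter l hl
      _ = ∑ l ∈ range j, w θ j l * w θ j (l+1) := by
          rw [Finset.sum_range_succ' (fun l => if 1 ≤ l then w θ j l * w θ j (l-1) else 0) j]
          simp only [Nat.le_add_left, if_pos, Nat.add_sub_cancel]
          norm_num
          exact Finset.sum_congr rfl (fun l _ => by ring)
  rw [h1, h2]
  unfold cdiag
  ring

noncomputable def Gf (θ t : ℝ) : ℝ := 1 - 2*θ*(1-θ)*(1 - Real.cos t)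

lemma hz (θ t : ℝ) (j : ℕ) :
    (((1-θ : ℝ):ℂ) + ((θ:ℝ):ℂ) * Complex.exp ((t:ℂ) * Complex.I))^j
      = ∑ l ∈ range (j+1), ((w θ j l : ℝ):ℂ) * Complex.exp ((((l:ℝ)*t : ℝ):ℂ) * Complex.I) := by
  rw [add_comm, add_pow]
  refine Finset.sum_congr rfl (fun l hl => ?_)
  rw [mul_pow, ← Complex.exp_nat_mul]
  have h1 : (l:ℂ) * ((t:ℂ) * Complex.I) = ((((l:ℝ)*t : ℝ)):ℂ) * Complex.I := by push_cast; ring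
  rw [h1]
  unfold w
  push_cast
  ring

lemma z_re (θ t : ℝ) (j : ℕ) :
    ((((1-θ : ℝ):ℂ) + ((θ:ℝ):ℂ) * Complex.exp ((t:ℂ) * Complex.I))^j).re
      = ∑ l ∈ range (j+1), w θ j l * Real.cos ((l:ℝ)*t) := by
  rw [hz, Complex.re_sum]
  refine Finset.sum_congr rfl (fun l _ => ?_)
  rw [Complex.mul_re]
  simp only [Complex.ofReal_re, Complex.ofReal_im, Complex.exp_ofReal_mul_I_re,
    Complex.exp_ofReal_mul_I_im]
  ring

lemma z_im (θ t : ℝ) (j : ℕ) :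
    ((((1-θ : ℝ):ℂ) + ((θ:ℝ):ℂ) * Complex.exp ((t:ℂ) * Complex.I))^j).im
      = ∑ l ∈ range (j+1), w θ j l * Real.sin ((l:ℝ)*t) := by
  rw [hz, Complex.im_sum]
  refine Finset.sum_congr rfl (fun l _ => ?_)
  rw [Complex.mul_im]
  simp only [Complex.ofReal_re, Complex.ofReal_im, Complex.exp_ofReal_mul_I_re,
    Complex.exp_ofReal_mul_I_im]
  ring

lemma normSq_z (θ t : ℝ) :
    Complex.normSq (((1-θ : ℝ):ℂ) + ((θ:ℝ):ℂ) * Complex.exp ((t:ℂ) * Complex.I)) = Gf θ t := by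
  rw [Complex.normSq_apply, Complex.add_re, Complex.add_im, Complex.mul_re, Complex.mul_im]
  simp only [Complex.ofReal_re, Complex.ofReal_im, Complex.exp_ofReal_mul_I_re,
    Complex.exp_ofReal_mul_I_im]
  unfold Gf
  linear_combination (θ^2) * Real.sin_sq_add_cos_sq t

lemma Gpow (θ t : ℝ) (j : ℕ) :
    (Gf θ t)^j = (∑ l ∈ range (j+1), w θ j l * Real.cos ((l:ℝ)*t))^2
      + (∑ l ∈ range (j+1), w θ j l * Real.sin ((l:ℝ)*t))^2 := by
  rw [← z_re θ t j, ← z_im θ t j, ← normSq_z θ t, ← map_pow Complex.normSq, Complex.normSq_apply]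
  ring

open Real in
lemma I1 (d : ℤ) : (∫ t in (-π)..π, Real.cos ((d:ℝ)*t)) = if d = 0 then 2*π else 0 := by
  by_cases hd : d = 0
  · subst hd
    simp only [Int.cast_zero, zero_mul, Real.cos_zero, if_pos]
    rw [intervalIntegral.integral_const]
    simp; ring
  · rw [if_neg hd]
    have hdr : (d:ℝ) ≠ 0 := Int.cast_ne_zero.mpr hd
    have hder : ∀ x ∈ Set.uIcc (-π) π,
        HasDerivAt (fun t => Real.sin ((d:ℝ)*t) / (d:ℝ)) (Real.cos ((d:ℝ)*x)) x := by
      intro x _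
      have h1 : HasDerivAt (fun t : ℝ => (d:ℝ)*t) (d:ℝ) x := by
        simpa using (hasDerivAt_id x).const_mul (d:ℝ)
      have h2 := (Real.hasDerivAt_sin ((d:ℝ)*x)).comp x h1
      have h3 := h2.div_const (d:ℝ)
      convert h3 using 1
      all_goals try rfl
      field_simp
    rw [intervalIntegral.integral_eq_sub_of_hasDerivAt hder
      ((Real.continuous_cos.comp (continuous_const.mul continuous_id)).intervalIntegrable _ _)]
    have e1 : (d:ℝ)*π = (d:ℝ)*π := rfl
    have h4 : Real.sin ((d:ℝ)*π) = 0 := Real.sin_int_mul_pi d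
    have h5 : Real.sin ((d:ℝ)*(-π)) = 0 := by
      rw [show (d:ℝ)*(-π) = -((d:ℝ)*π) by ring, Real.sin_neg, h4, neg_zero]
    rw [h4, h5]
    simp

open Real in
lemma cosInt (c : ℝ) : IntervalIntegrable (fun t => Real.cos (c*t)) MeasureTheory.volume (-π) π :=
  (Continuous.intervalIntegrable (by fun_prop) _ _)

open Real in
lemma cosCosInt (c : ℝ) : IntervalIntegrable (fun t => Real.cos t * Real.cos (c*t)) MeasureTheory.volume (-π) π :=
  (Continuous.intervalIntegrable (by fun_prop) _ _)

open Real in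
lemma I2 (d : ℤ) : (∫ t in (-π)..π, Real.cos t * Real.cos ((d:ℝ)*t))
    = if d = 1 ∨ d = -1 then π else 0 := by
  have hpt : ∀ t ∈ Set.uIcc (-π) π, Real.cos t * Real.cos ((d:ℝ)*t)
      = (Real.cos (((d+1 : ℤ):ℝ)*t) + Real.cos (((d-1 : ℤ):ℝ)*t))/2 := by
    intro t _
    have e1 : ((d+1:ℤ):ℝ)*t = (d:ℝ)*t + t := by push_cast; ring
    have e2 : ((d-1:ℤ):ℝ)*t = (d:ℝ)*t - t := by push_cast; ring
    rw [e1, e2, Real.cos_add, Real.cos_sub]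
    ring
  rw [intervalIntegral.integral_congr hpt, intervalIntegral.integral_div,
    intervalIntegral.integral_add (cosInt _) (cosInt _), I1, I1]
  by_cases h1 : d = 1
  · subst h1; norm_num
  · by_cases h2 : d = -1
    · subst h2; norm_num
    · rw [if_neg (by omega), if_neg (by omega), if_neg (by tauto)]
      norm_num

open Real in
lemma Iterm (l m : ℕ) : (∫ t in (-π)..π, (1 + Real.cos t) * Real.cos ((l:ℝ)*t - (m:ℝ)*t))
    = (if l = m then 2*π else 0) + (if m = l+1 ∨ l = m+1 then π else 0) := by
  have hpt : ∀ t ∈ Set.uIcc (-π) π, (1 + Real.cos t) * Real.cos ((l:ℝ)*t - (m:ℝ)*t)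
      = Real.cos ((((l:ℤ)-m :ℤ):ℝ)*t) + Real.cos t * Real.cos ((((l:ℤ)-m:ℤ):ℝ)*t) := by
    intro t _
    have e : ((((l:ℤ)-m:ℤ)):ℝ)*t = (l:ℝ)*t - (m:ℝ)*t := by push_cast; ring
    rw [e]; ring
  rw [intervalIntegral.integral_congr hpt,
    intervalIntegral.integral_add (cosInt _) (cosCosInt _), I1, I2]
  by_cases h : l = m
  · rw [if_pos (by omega), if_pos h, if_neg (by omega), if_neg (by omega)]
  · rw [if_neg (by omega), if_neg h]
    by_cases h2 : m = l+1 ∨ l = m+1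
    · rw [if_pos (by omega), if_pos h2]
    · rw [if_neg (by omega), if_neg h2]

lemma w_overflow (θ : ℝ) (j : ℕ) : w θ j (j+1) = 0 := by
  unfold w
  rw [Nat.choose_eq_zero_of_lt (by omega)]
  norm_num

lemma H1 (θ : ℝ) (j : ℕ) (c : ℝ) :
    ∑ l ∈ range (j+1), ∑ m ∈ range (j+1), w θ j l * w θ j m * (if l = m then c else 0)
      = c * ∑ l ∈ range (j+1), (w θ j l)^2 := by
  rw [Finset.mul_sum]
  refine Finset.sum_congr rfl (fun l hl => ?_)
  have h : ∀ m ∈ range (j+1), w θ j l * w θ j m * (if l = m then c else 0)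
      = (if m = l then w θ j l * w θ j m * c else 0) := by
    intro m _
    by_cases h2 : l = m
    · rw [if_pos h2, if_pos h2.symm]
    · rw [if_neg h2, if_neg (fun hc => h2 hc.symm)]; ring
  rw [Finset.sum_congr rfl h, Finset.sum_ite_eq' (range (j+1)) l (fun m => w θ j l * w θ j m * c),
    if_pos hl]
  ring

lemma H2 (θ : ℝ) (j : ℕ) (c : ℝ) :
    ∑ l ∈ range (j+1), ∑ m ∈ range (j+1), w θ j l * w θ j m * (if m = l+1 then c else 0)
      = c * ∑ l ∈ range j, w θ j l * w θ j (l+1) := by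
  have hin : ∀ l ∈ range (j+1), ∑ m ∈ range (j+1), w θ j l * w θ j m * (if m = l+1 then c else 0)
      = (if l+1 ∈ range (j+1) then w θ j l * w θ j (l+1) * c else 0) := by
    intro l _
    have h : ∀ m ∈ range (j+1), w θ j l * w θ j m * (if m = l+1 then c else 0)
        = (if m = l+1 then w θ j l * w θ j m * c else 0) := by
      intro m _
      by_cases h2 : m = l+1
      · rw [if_pos h2, if_pos h2]
      · rw [if_neg h2, if_neg h2]; ring
    rw [Finset.sum_congr rfl h,
      Finset.sum_ite_eq' (range (j+1)) (l+1) (fun m => w θ j l * w θ j m * c)]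
  rw [Finset.sum_congr rfl hin, Finset.sum_range_succ, if_neg (by simp), add_zero, Finset.mul_sum]
  refine Finset.sum_congr rfl (fun l hl => ?_)
  rw [Finset.mem_range] at hl
  rw [if_pos (Finset.mem_range.mpr (by omega))]
  ring

lemma H3 (θ : ℝ) (j : ℕ) (c : ℝ) :
    ∑ l ∈ range (j+1), ∑ m ∈ range (j+1), w θ j l * w θ j m * (if l = m+1 then c else 0)
      = c * ∑ l ∈ range j, w θ j l * w θ j (l+1) := by
  rw [Finset.sum_comm, ← H2 θ j c]
  exact Finset.sum_congr rfl (fun m _ => Finset.sum_congr rfl (fun l _ => by ring))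

open Real in
lemma cdiag_integral (θ : ℝ) (j : ℕ) :
    (2*π)⁻¹ * (∫ t in (-π)..π, (1 + Real.cos t) * (Gf θ t)^j) = cdiag θ j := by
  have hexp : ∀ t ∈ Set.uIcc (-π) π, (1 + Real.cos t) * (Gf θ t)^j
      = ∑ l ∈ range (j+1), ∑ m ∈ range (j+1),
          w θ j l * w θ j m * ((1 + Real.cos t) * Real.cos ((l:ℝ)*t - (m:ℝ)*t)) := by
    intro t _
    rw [Gpow θ t j, sq, sq, Finset.sum_mul_sum, Finset.sum_mul_sum, ← Finset.sum_add_distrib,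
      Finset.mul_sum]
    refine Finset.sum_congr rfl (fun l _ => ?_)
    rw [← Finset.sum_add_distrib, Finset.mul_sum]
    refine Finset.sum_congr rfl (fun m _ => ?_)
    rw [Real.cos_sub]
    ring
  rw [intervalIntegral.integral_congr hexp,
    intervalIntegral.integral_finset_sum (fun l _ =>
      Continuous.intervalIntegrable (continuous_finset_sum _ (fun m _ => by fun_prop)) _ _)]
  have hstep : ∀ l ∈ range (j+1),
      (∫ t in (-π)..π, ∑ m ∈ range (j+1),
        w θ j l * w θ j m * ((1 + Real.cos t) * Real.cos ((l:ℝ)*t - (m:ℝ)*t)))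
      = ∑ m ∈ range (j+1), w θ j l * w θ j m *
          ((if l = m then 2*π else 0) + (if m = l+1 ∨ l = m+1 then π else 0)) := by
    intro l _
    rw [intervalIntegral.integral_finset_sum (fun m _ =>
      Continuous.intervalIntegrable (by fun_prop) _ _)]
    refine Finset.sum_congr rfl (fun m _ => ?_)
    rw [intervalIntegral.integral_const_mul, Iterm]
  rw [Finset.sum_congr rfl hstep]
  have hsplit : ∀ l ∈ range (j+1), ∀ m ∈ range (j+1),
      w θ j l * w θ j m * ((if l = m then 2*π else 0) + (if m = l+1 ∨ l = m+1 then π else 0))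
      = w θ j l * w θ j m * (if l = m then 2*π else 0)
        + (w θ j l * w θ j m * (if m = l+1 then π else 0)
          + w θ j l * w θ j m * (if l = m+1 then π else 0)) := by
    intro l _ m _
    by_cases h1 : l = m
    · rw [if_pos h1, if_neg (by omega), if_neg (by omega), if_neg (by omega)]; ring
    · rw [if_neg h1]
      by_cases h2 : m = l+1
      · rw [if_pos (Or.inl h2), if_pos h2, if_neg (by omega)]; ring
      · by_cases h3 : l = m+1
        · rw [if_pos (Or.inr h3), if_neg h2, if_pos h3]; ring
        · rw [if_neg (by tauto), if_neg h2, if_neg h3]; ring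
  calc (2*π)⁻¹ * ∑ l ∈ range (j+1), ∑ m ∈ range (j+1),
        w θ j l * w θ j m * ((if l = m then 2*π else 0) + (if m = l+1 ∨ l = m+1 then π else 0))
      = (2*π)⁻¹ * ∑ l ∈ range (j+1), ∑ m ∈ range (j+1),
          (w θ j l * w θ j m * (if l = m then 2*π else 0)
            + (w θ j l * w θ j m * (if m = l+1 then π else 0)
              + w θ j l * w θ j m * (if l = m+1 then π else 0))) := by
        congr 1
        exact Finset.sum_congr rfl (fun l hl => Finset.sum_congr rfl (fun m hm => hsplit l hl m hm))
    _ = (2*π)⁻¹ * ((∑ l ∈ range (j+1), ∑ m ∈ range (j+1),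
            w θ j l * w θ j m * (if l = m then 2*π else 0))
          + ((∑ l ∈ range (j+1), ∑ m ∈ range (j+1),
              w θ j l * w θ j m * (if m = l+1 then π else 0))
            + (∑ l ∈ range (j+1), ∑ m ∈ range (j+1),
              w θ j l * w θ j m * (if l = m+1 then π else 0)))) := by
        congr 1
        rw [← Finset.sum_add_distrib, ← Finset.sum_add_distrib]
        refine Finset.sum_congr rfl (fun l _ => ?_)
        rw [← Finset.sum_add_distrib, ← Finset.sum_add_distrib]
    _ = (2*π)⁻¹ * ((2*π) * ∑ l ∈ range (j+1), (w θ j l)^2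
          + (π * ∑ l ∈ range j, w θ j l * w θ j (l+1)
            + π * ∑ l ∈ range j, w θ j l * w θ j (l+1))) := by
        rw [H1, H2, H3]
    _ = cdiag θ j := by
        unfold cdiag
        have hπ : π ≠ 0 := Real.pi_ne_zero
        field_simp
        ring

open Real MeasureTheory in
lemma cdiag_le (θ : ℝ) (hθ0 : 0 < θ) (hθ1 : θ < 1) (j : ℕ) (hj : 1 ≤ j) :
    cdiag θ j ≤ 1 / Real.sqrt ((j:ℝ) * π * θ * (1-θ)) := by
  set u : ℝ := θ*(1-θ) with hu_def
  have hu : 0 < u := mul_pos hθ0 (by linarith)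
  have h4u : 4*u ≤ 1 := by nlinarith [sq_nonneg (2*θ-1)]
  have hjR : (1:ℝ) ≤ (j:ℝ) := by exact_mod_cast hj
  have hb : 0 < 4*u*(j:ℝ) := by nlinarith
  set g : ℝ → ℝ := fun r => Real.exp (-(4*u*(j:ℝ)) * r^2) with hg_def
  have hgc : Continuous g := by fun_prop
  -- substitution t = 2s
  have hsub : (∫ t in (-π)..π, (1 + Real.cos t) * (Gf θ t)^j)
      = 2 * ∫ s in (-(π/2))..(π/2), (1 + Real.cos (2*s)) * (Gf θ (2*s))^j := by
    have h := intervalIntegral.integral_comp_mul_left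
      (a := -(π/2)) (b := π/2) (fun t => (1 + Real.cos t) * (Gf θ t)^j) (two_ne_zero)
    rw [show (2:ℝ)*(-(π/2)) = -π by ring, show (2:ℝ)*(π/2) = π by ring, smul_eq_mul] at h
    rw [h]
    ring
  -- pointwise rewriting of the half-angle form
  have hpt : ∀ s : ℝ, (1 + Real.cos (2*s)) * (Gf θ (2*s))^j
      = 2*(Real.cos s)^2 * (1 - 4*u*(Real.sin s)^2)^j := by
    intro s
    have hcos := Real.cos_two_mul s
    have hpyth := Real.sin_sq_add_cos_sq s
    have h1 : 1 + Real.cos (2*s) = 2*(Real.cos s)^2 := by linarith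
    have h2 : Gf θ (2*s) = 1 - 4*u*(Real.sin s)^2 := by
      unfold Gf
      rw [hcos]
      nlinarith [hpyth]
    rw [h1, h2]
  -- pointwise bound
  have hbd : ∀ s ∈ Set.Icc (-(π/2)) (π/2),
      (1 + Real.cos (2*s)) * (Gf θ (2*s))^j ≤ 2 * (Real.cos s • (g ∘ Real.sin) s) := by
    intro s hs
    rw [hpt s]
    have hc0 : 0 ≤ Real.cos s := Real.cos_nonneg_of_mem_Icc hs
    have hc1 : Real.cos s ≤ 1 := Real.cos_le_one s
    have hs1 : (Real.sin s)^2 ≤ 1 := by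
      nlinarith [Real.sin_sq_add_cos_sq s, sq_nonneg (Real.cos s)]
    have hb0 : (0:ℝ) ≤ 1 - 4*u*(Real.sin s)^2 := by nlinarith [sq_nonneg (Real.sin s)]
    have hb1 : 1 - 4*u*(Real.sin s)^2 ≤ Real.exp (-(4*u*(Real.sin s)^2)) := by
      have := Real.one_sub_le_exp_neg (4*u*(Real.sin s)^2)
      simpa using this
    have hpow : (1 - 4*u*(Real.sin s)^2)^j ≤ Real.exp (-(4*u*(Real.sin s)^2))^j :=
      pow_le_pow_left₀ hb0 hb1 j
    have hexpj : Real.exp (-(4*u*(Real.sin s)^2))^j = (g ∘ Real.sin) s := by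
      rw [hg_def]
      simp only [Function.comp_apply]
      rw [← Real.exp_nat_mul]
      congr 1
      ring
    rw [← hexpj]
    simp only [smul_eq_mul]
    have hpj0 : 0 ≤ (1 - 4*u*(Real.sin s)^2)^j := pow_nonneg hb0 j
    have hE0 : 0 ≤ Real.exp (-(4*u*(Real.sin s)^2))^j := pow_nonneg (Real.exp_pos _).le j
    nlinarith [mul_le_mul_of_nonneg_left hpow hc0,
      mul_le_mul_of_nonneg_right (mul_le_mul_of_nonneg_left hc1 hc0) hE0,
      mul_le_mul_of_nonneg_right hpow (mul_nonneg hc0 hc0)]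
  -- integrate the bound
  have hmono : (∫ s in (-(π/2))..(π/2), (1 + Real.cos (2*s)) * (Gf θ (2*s))^j)
      ≤ ∫ s in (-(π/2))..(π/2), 2 * (Real.cos s • (g ∘ Real.sin) s) := by
    have hGf : Continuous (Gf θ) := by unfold Gf; fun_prop
    apply intervalIntegral.integral_mono_on (by linarith [Real.pi_pos])
    · exact Continuous.intervalIntegrable (by fun_prop) _ _
    · exact Continuous.intervalIntegrable (by
        simp only [smul_eq_mul, Function.comp]
        fun_prop) _ _
    · exact hbd
  -- substitution r = sin s
  have hsubst : (∫ s in (-(π/2))..(π/2), Real.cos s • (g ∘ Real.sin) s)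
      = ∫ r in (-1:ℝ)..1, g r := by
    have h := intervalIntegral.integral_comp_smul_deriv
      (f := Real.sin) (f' := Real.cos) (g := g) (a := -(π/2)) (b := π/2)
      (fun x _ => Real.hasDerivAt_sin x) (Real.continuous_cos.continuousOn) hgc
    rw [h, Real.sin_pi_div_two, show Real.sin (-(π/2)) = -1 by
      rw [Real.sin_neg, Real.sin_pi_div_two]]
  -- gaussian bound
  have hgauss : (∫ r in (-1:ℝ)..1, g r) ≤ Real.sqrt (π / (4*u*(j:ℝ))) := by
    rw [intervalIntegral.integral_of_le (by norm_num : (-1:ℝ) ≤ 1)]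
    calc (∫ r in Set.Ioc (-1:ℝ) 1, g r)
        ≤ ∫ r : ℝ, g r := by
          apply MeasureTheory.setIntegral_le_integral (integrable_exp_neg_mul_sq hb)
          exact Filter.Eventually.of_forall (fun x => (Real.exp_pos _).le)
      _ = Real.sqrt (π / (4*u*(j:ℝ))) := integral_gaussian _
  -- assemble
  have hchain : cdiag θ j ≤ (2*π)⁻¹ * (2 * (2 * Real.sqrt (π / (4*u*(j:ℝ))))) := by
    rw [← cdiag_integral θ j, hsub]
    have hπ : (0:ℝ) < (2*π)⁻¹ := by positivity
    apply mul_le_mul_of_nonneg_left _ hπ.le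
    have h2 : (∫ s in (-(π/2))..(π/2), 2 * (Real.cos s • (g ∘ Real.sin) s))
        = 2 * ∫ r in (-1:ℝ)..1, g r := by
      rw [intervalIntegral.integral_const_mul, hsubst]
    nlinarith [hmono, hgauss, h2]
  -- final algebra
  have heq : (2*π)⁻¹ * (2 * (2 * Real.sqrt (π / (4*u*(j:ℝ)))))
      = 1 / Real.sqrt ((j:ℝ) * π * θ * (1-θ)) := by
    have hsp : Real.sqrt π > 0 := Real.sqrt_pos.mpr Real.pi_pos
    have hsu : Real.sqrt (u*(j:ℝ)) > 0 := Real.sqrt_pos.mpr (by nlinarith)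
    have h1 : Real.sqrt (π / (4*u*(j:ℝ))) = Real.sqrt π / Real.sqrt (4*(u*(j:ℝ))) := by
      rw [Real.sqrt_div Real.pi_pos.le]
      congr 2
      ring
    have h2 : Real.sqrt (4*(u*(j:ℝ))) = 2 * Real.sqrt (u*(j:ℝ)) := by
      rw [show (4:ℝ)*(u*(j:ℝ)) = (2:ℝ)^2*(u*(j:ℝ)) by ring, Real.sqrt_mul (by positivity),
        Real.sqrt_sq (by norm_num)]
    have h3 : Real.sqrt ((j:ℝ) * π * θ * (1-θ)) = Real.sqrt π * Real.sqrt (u*(j:ℝ)) := by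
      rw [show (j:ℝ) * π * θ * (1-θ) = π * (u*(j:ℝ)) by rw [hu_def]; ring,
        Real.sqrt_mul Real.pi_pos.le]
    rw [h1, h2, h3]
    have hππ : Real.sqrt π * Real.sqrt π = π := Real.mul_self_sqrt Real.pi_pos.le
    set sp := Real.sqrt π with hsp_def
    set su := Real.sqrt (u*(j:ℝ)) with hsu_def
    have hπ0 : π > 0 := Real.pi_pos
    calc (2*π)⁻¹ * (2 * (2 * (sp/(2*su)))) = sp/(π*su) := by
          field_simp
      _ = 1/(sp*su) := by
          rw [div_eq_div_iff (by positivity) (by positivity)]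
          linear_combination su * hππ
  rw [← heq]
  exact hchain
end KM16

/-- Rate of asymptotic regularity of Krasnosel'skii–Mann iterations, for an
arbitrary norm `nrm` on ℝⁿ. -/
theorem stmt_16 {n : ℕ} (nrm : (Fin n → ℝ) → ℝ)
    (hadd : ∀ x y, nrm (x + y) ≤ nrm x + nrm y)
    (hsmul : ∀ (a : ℝ) (x), nrm (a • x) = |a| * nrm x)
    (hdef : ∀ x, nrm x = 0 ↔ x = 0)
    (T : (Fin n → ℝ) → (Fin n → ℝ))
    (hT : ∀ x y, nrm (T x - T y) ≤ nrm (x - y))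
    (θ : ℝ) (hθ : θ ∈ Set.Ioo (0 : ℝ) 1)
    (xs : Fin n → ℝ) (hxs : T xs = xs)
    (x : ℕ → (Fin n → ℝ))
    (hx : ∀ k, x (k + 1) = (1 - θ) • x k + θ • T (x k)) :
    (∀ k : ℕ, 1 ≤ k →
      nrm (x k - T (x k)) ≤
        2 * nrm (x 0 - xs) / Real.sqrt ((k : ℝ) * Real.pi * θ * (1 - θ))) ∧
    Tendsto (fun k => nrm (x k - T (x k))) atTop (nhds 0) := by
  obtain ⟨hθ0, hθ1⟩ := hθ
  set R : ℝ := nrm (x 0 - xs) with hR_def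
  -- basic norm facts
  have nrm0 : nrm 0 = 0 := (hdef 0).mpr rfl
  have nrm_neg : ∀ v, nrm (-v) = nrm v := by
    intro v
    calc nrm (-v) = nrm ((-1 : ℝ) • v) := by rw [neg_one_smul]
      _ = |(-1 : ℝ)| * nrm v := hsmul _ _
      _ = nrm v := by norm_num
  have nrm_nonneg : ∀ v, 0 ≤ nrm v := by
    intro v
    have h := hadd v (-v)
    rw [add_neg_cancel, nrm0, nrm_neg] at h
    linarith
  have nrm_sub_le : ∀ u v w₀, nrm (u - w₀) ≤ nrm (u - v) + nrm (v - w₀) := by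
    intro u v w₀
    have h := hadd (u - v) (v - w₀)
    rwa [show u - v + (v - w₀) = u - w₀ by abel] at h
  have conv_le : ∀ (a b : ℝ) u v, 0 ≤ a → 0 ≤ b →
      nrm (a • u + b • v) ≤ a * nrm u + b * nrm v := by
    intro a b u v ha hb
    calc nrm (a • u + b • v) ≤ nrm (a • u) + nrm (b • v) := hadd _ _
      _ = a * nrm u + b * nrm v := by
          rw [hsmul, hsmul, abs_of_nonneg ha, abs_of_nonneg hb]
  have hR0 : 0 ≤ R := nrm_nonneg _
  -- Fejér monotonicity
  have hρ : ∀ k, nrm (x k - xs) ≤ R := by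
    intro k
    induction k with
    | zero => exact le_refl R
    | succ k ih =>
      have hxid : x (k+1) - xs = (1-θ) • (x k - xs) + θ • (T (x k) - xs) := by
        rw [hx k]; module
      rw [hxid]
      have hTk : nrm (T (x k) - xs) ≤ nrm (x k - xs) := by
        have := hT (x k) xs
        rwa [hxs] at this
      calc nrm ((1-θ) • (x k - xs) + θ • (T (x k) - xs))
          ≤ (1-θ) * nrm (x k - xs) + θ * nrm (T (x k) - xs) :=
            conv_le _ _ _ _ (by linarith) (by linarith)
        _ ≤ R := by nlinarith [hTk.trans ih]
  have hB0 : ∀ j, nrm (x 0 - T (x j)) ≤ 2 * R := by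
    intro j
    have h2 : nrm (xs - T (x j)) ≤ R := by
      have h3 : nrm (T (x j) - xs) ≤ nrm (x j - xs) := by
        have := hT (x j) xs; rwa [hxs] at this
      have h4 : nrm (xs - T (x j)) = nrm (T (x j) - xs) := by
        rw [show xs - T (x j) = -(T (x j) - xs) by abel, nrm_neg]
      rw [h4]; exact h3.trans (hρ j)
    calc nrm (x 0 - T (x j)) ≤ nrm (x 0 - xs) + nrm (xs - T (x j)) := nrm_sub_le _ _ _
      _ ≤ 2 * R := by rw [← hR_def] at *; linarith
  -- the main double induction
  have key : ∀ j : ℕ, (∀ k, k ≤ j → nrm (x k - x j) ≤ 2*R*(KM16.A θ k j))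
      ∧ (∀ k, k ≤ j → nrm (x k - T (x j)) ≤ 2*R*(KM16.B θ k j)) := by
    intro j
    induction j with
    | zero =>
      constructor
      · intro k hk
        have hk0 : k = 0 := by omega
        subst hk0
        rw [sub_self, nrm0, KM16.A_diag, mul_zero]
      · intro k hk
        have hk0 : k = 0 := by omega
        subst hk0
        rw [KM16.B_zero_left, mul_one]
        exact hB0 0
    | succ j ih =>
      obtain ⟨ihA, ihB⟩ := ih
      have hAnew : ∀ k, k ≤ j+1 → nrm (x k - x (j+1)) ≤ 2*R*(KM16.A θ k (j+1)) := by
        intro k hk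
        rcases Nat.eq_or_lt_of_le hk with heq | hlt
        · subst heq
          rw [sub_self, nrm0, KM16.A_diag, mul_zero]
        · have hk' : k ≤ j := by omega
          have hxid : x k - x (j+1) = (1-θ) • (x k - x j) + θ • (x k - T (x j)) := by
            rw [hx j]; module
          rw [hxid, KM16.A_succ_right]
          have h1 := ihA k hk'
          have h2 := ihB k hk'
          calc nrm ((1-θ) • (x k - x j) + θ • (x k - T (x j)))
              ≤ (1-θ) * nrm (x k - x j) + θ * nrm (x k - T (x j)) :=
                conv_le _ _ _ _ (by linarith) (by linarith)
            _ ≤ (1-θ) * (2*R*(KM16.A θ k j)) + θ * (2*R*(KM16.B θ k j)) := by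
                have e1 := mul_le_mul_of_nonneg_left h1 (by linarith : (0:ℝ) ≤ 1-θ)
                have e2 := mul_le_mul_of_nonneg_left h2 hθ0.le
                linarith
            _ = 2*R*((1-θ) * KM16.A θ k j + θ * KM16.B θ k j) := by ring
      refine ⟨hAnew, ?_⟩
      intro k
      induction k with
      | zero =>
        intro _
        rw [KM16.B_zero_left, mul_one]
        exact hB0 (j+1)
      | succ k ihk =>
        intro hk
        have hxid : x (k+1) - T (x (j+1))
            = (1-θ) • (x k - T (x (j+1))) + θ • (T (x k) - T (x (j+1))) := by
          rw [hx k]; module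
        rw [hxid, KM16.B_succ_left]
        have h1 : nrm (x k - T (x (j+1))) ≤ 2*R*(KM16.B θ k (j+1)) := ihk (by omega)
        have h2 : nrm (T (x k) - T (x (j+1))) ≤ nrm (x k - x (j+1)) := hT _ _
        have h3 : nrm (x k - x (j+1)) ≤ 2*R*(KM16.A θ k (j+1)) := hAnew k (by omega)
        calc nrm ((1-θ) • (x k - T (x (j+1))) + θ • (T (x k) - T (x (j+1))))
            ≤ (1-θ) * nrm (x k - T (x (j+1))) + θ * nrm (T (x k) - T (x (j+1))) :=
              conv_le _ _ _ _ (by linarith) (by linarith)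
          _ ≤ (1-θ) * (2*R*(KM16.B θ k (j+1))) + θ * (2*R*(KM16.A θ k (j+1))) := by
              have e1 := mul_le_mul_of_nonneg_left h1 (by linarith : (0:ℝ) ≤ 1-θ)
              have e2 := mul_le_mul_of_nonneg_left (h2.trans h3) hθ0.le
              linarith
          _ = 2*R*((1-θ) * KM16.B θ k (j+1) + θ * KM16.A θ k (j+1)) := by ring
  -- the quantitative bound
  have main : ∀ k : ℕ, 1 ≤ k →
      nrm (x k - T (x k)) ≤ 2 * R / Real.sqrt ((k : ℝ) * Real.pi * θ * (1 - θ)) := by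
    intro k hk
    have hbd := (key k).2 k le_rfl
    rw [KM16.B_diag] at hbd
    have hcle := KM16.cdiag_le θ hθ0 hθ1 k hk
    calc nrm (x k - T (x k)) ≤ 2*R*(KM16.cdiag θ k) := hbd
      _ ≤ 2*R*(1 / Real.sqrt ((k : ℝ) * Real.pi * θ * (1 - θ))) := by
          apply mul_le_mul_of_nonneg_left hcle (by linarith)
      _ = 2 * R / Real.sqrt ((k : ℝ) * Real.pi * θ * (1 - θ)) := by
          rw [mul_one_div]
  refine ⟨main, ?_⟩
  -- convergence to 0
  have hc : (0:ℝ) < Real.pi * θ * (1-θ) :=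
    mul_pos (mul_pos Real.pi_pos hθ0) (by linarith)
  have hsqrt_tend : Tendsto (fun k : ℕ => Real.sqrt ((k : ℝ) * Real.pi * θ * (1 - θ)))
      atTop atTop := by
    apply Filter.tendsto_atTop.2
    intro b
    rcases le_or_gt b 0 with hb | hb
    · filter_upwards with k
      exact hb.trans (Real.sqrt_nonneg _)
    · filter_upwards [Filter.eventually_ge_atTop ⌈b^2 / (Real.pi * θ * (1-θ))⌉₊] with k hkk
      have h1 : b^2 / (Real.pi * θ * (1-θ)) ≤ (k:ℝ) := by
        calc b^2 / (Real.pi * θ * (1-θ)) ≤ (⌈b^2 / (Real.pi * θ * (1-θ))⌉₊ : ℝ) := Nat.le_ceil _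
          _ ≤ (k:ℝ) := by exact_mod_cast hkk
      have h2 : b^2 ≤ (k:ℝ) * Real.pi * θ * (1-θ) := by
        rw [div_le_iff₀ hc] at h1
        nlinarith
      calc b = Real.sqrt (b^2) := by rw [Real.sqrt_sq hb.le]
        _ ≤ Real.sqrt ((k:ℝ) * Real.pi * θ * (1-θ)) := Real.sqrt_le_sqrt h2
  have htend : Tendsto (fun k : ℕ => 2 * R / Real.sqrt ((k : ℝ) * Real.pi * θ * (1 - θ)))
      atTop (nhds 0) := by
    have h := hsqrt_tend.inv_tendsto_atTop
    have h2 := h.const_mul (2*R)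
    rw [mul_zero] at h2
    have heqf : (fun k : ℕ => 2 * R / Real.sqrt ((k : ℝ) * Real.pi * θ * (1 - θ)))
        = fun k : ℕ => (2*R) * ((fun k : ℕ => Real.sqrt ((k : ℝ) * Real.pi * θ * (1 - θ)))⁻¹ k) := by
      funext k
      simp [div_eq_mul_inv]
    rw [heqf]
    exact h2
  apply squeeze_zero' (Filter.Eventually.of_forall (fun k => nrm_nonneg _)) _ htend
  filter_upwards [Filter.eventually_ge_atTop 1] with k hk
  exact main k hk
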